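/- Let [i,j] = |(1 + D_i) ∩ E_j| where 1 + D_i = {(1 + u) mod 2p : u ∈ D_i}. Then [0,0] equals (p-5)/4 if p ≡ 1 (mod 8), (p-3)/4 if p ≡ 7 (mod 8), (p-1)/4 if p ≡ 5 (mod 8), and (p+1)/4 if p ≡ 3 (mod 8); and [0,1] equals (p-1)/4 if p ≡ 1 (mod 8), (p+1)/4 if p ≡ 7 (mod 8), (p-5)/4 if p ≡ 5 (mod 8), and (p-3)/4 if p ≡ 3 (mod 8). -/

import Mathlib

open Polynomial

/-- The generalized cyclotomic class `D_i = {g^(2n+i) mod 2p : n = 0,...,(p-3)/2}` in `Z_{2p}`. -/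
def Dcl (p g : ℕ) (i : ℕ) : Finset (ZMod (2 * p)) :=
  (Finset.range ((p - 1) / 2)).image (fun n => (g : ZMod (2 * p)) ^ (2 * n + i))

/-- The generalized cyclotomic class `E_i = {2u mod 2p : u ∈ D_i}` in `Z_{2p}`. -/
def Ecl (p g : ℕ) (i : ℕ) : Finset (ZMod (2 * p)) :=
  (Dcl p g i).image (fun u => 2 * u)

set_option linter.unusedSectionVars false
set_option linter.unnecessarySeqFocus false

section chars
variable {p : ℕ} [Fact p.Prime]


lemma chi_shift_sum (f : ZMod p → ℤ) :
    ∑ a : ZMod p, f (a - 1) = ∑ a : ZMod p, f a :=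
  Fintype.sum_equiv (Equiv.addRight (-1 : ZMod p)) _ _ (fun a => by
    simp [sub_eq_add_neg])

lemma sum_chi_mul (hp2 : ringChar (ZMod p) ≠ 2) :
    ∑ a : ZMod p, quadraticChar (ZMod p) (a - 1) * quadraticChar (ZMod p) a = -1 := by
  set χ := quadraticChar (ZMod p) with hχ
  have h0 : ∀ a : ZMod p, a ≠ 0 → χ (a - 1) * χ a = χ (1 - a⁻¹) := by
    intro a ha
    have : (a - 1) * a = a ^ 2 * (1 - a⁻¹) := by
      field_simp
    rw [← map_mul, this, map_mul, quadraticChar_sq_one' ha, one_mul]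
  rw [← Finset.sum_erase_add _ _ (Finset.mem_univ (0 : ZMod p))]
  have e0 : χ 0 = 0 := by simp [hχ]
  rw [e0, mul_zero, add_zero]
  rw [Finset.sum_congr rfl (fun a ha => h0 a (Finset.ne_of_mem_erase ha))]
  have hbij : ∑ a ∈ Finset.univ.erase (0 : ZMod p), χ (1 - a⁻¹)
      = ∑ z ∈ Finset.univ.erase (1 : ZMod p), χ z := by
    apply Finset.sum_nbij' (fun a => 1 - a⁻¹) (fun z => (1 - z)⁻¹)
    · intro a ha
      simp only [Finset.mem_erase, Finset.mem_univ, and_true] at ha ⊢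
      intro h
      apply ha
      have : a⁻¹ = 0 := by linear_combination -h
      simpa using this
    · intro z hz
      simp only [Finset.mem_erase, Finset.mem_univ, and_true] at hz ⊢
      intro h
      apply hz
      have h1 : (1 : ZMod p) - z ≠ 0 := by
        intro hh; exact hz (by linear_combination -hh)
      rw [inv_eq_zero] at h
      exact absurd h h1
    · intro a ha
      simp only [Finset.mem_erase, Finset.mem_univ, and_true] at ha
      have : (1 : ZMod p) - (1 - a⁻¹) = a⁻¹ := by ring
      rw [this, inv_inv]
    · intro z hz
      simp only [Finset.mem_erase, Finset.mem_univ, and_true] at hz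
      have h1 : (1 : ZMod p) - z ≠ 0 := by
        intro hh; exact hz (by linear_combination -hh)
      rw [inv_inv]
      ring
    · intro a ha; rfl
  rw [hbij]
  have := quadraticChar_sum_zero hp2
  rw [← Finset.sum_erase_add _ _ (Finset.mem_univ (1 : ZMod p))] at this
  rw [← hχ, map_one] at this; linarith

lemma count_lemma (hp2 : ringChar (ZMod p) ≠ 2) (b : ℤ) (hb : b = 1 ∨ b = -1) :
    ((Finset.univ.filter (fun a : ZMod p =>
      quadraticChar (ZMod p) (a - 1) = 1 ∧ quadraticChar (ZMod p) a = b)).card : ℤ) * 4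
      = p - 2 - 2 * b - quadraticChar (ZMod p) (-1) := by
  classical
  set χ := quadraticChar (ZMod p) with hχ
  set f : ZMod p → ℤ := fun a => (1 + χ (a - 1)) * (1 + b * χ a) with hf
  have hb0 : b ≠ 0 := by rcases hb with rfl | rfl <;> norm_num
  -- expansion
  have hT1 : ∑ a : ZMod p, f a = p - b := by
    have expand : ∀ a : ZMod p, f a = 1 + χ (a - 1) + b * χ a + b * (χ (a - 1) * χ a) := by
      intro a; simp only [hf]; ring
    rw [Finset.sum_congr rfl (fun a _ => expand a)]
    rw [Finset.sum_add_distrib, Finset.sum_add_distrib, Finset.sum_add_distrib,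
      ← Finset.mul_sum, ← Finset.mul_sum]
    have s1 : ∑ a : ZMod p, χ (a - 1) = 0 := by
      rw [chi_shift_sum (fun a => χ a)]; exact quadraticChar_sum_zero hp2
    have s2 : ∑ _a : ZMod p, (1 : ℤ) = p := by
      simp [ZMod.card]
    rw [s1, s2, quadraticChar_sum_zero hp2, sum_chi_mul hp2]
    ring
  -- decomposition
  have h01 : (1 : ZMod p) ≠ 0 := one_ne_zero
  have key : ∀ a : ZMod p, a ≠ 0 → a ≠ 1 →
      f a = if χ (a - 1) = 1 ∧ χ a = b then 4 else 0 := by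
    intro a ha ha1
    have hsub : a - 1 ≠ 0 := sub_ne_zero.mpr ha1
    rcases quadraticChar_dichotomy hsub with h1 | h1 <;>
      rcases quadraticChar_dichotomy ha with h2 | h2 <;>
      rcases hb with rfl | rfl <;>
      simp only [hf, hχ, h1, h2] <;> norm_num
  have hfilter : (Finset.univ.erase (0 : ZMod p)).erase 1 =
      ((Finset.univ.erase (0 : ZMod p)).erase 1 : Finset (ZMod p)) := rfl
  have hsplit : ∑ a : ZMod p, f a
      = (∑ a ∈ (Finset.univ.erase (0 : ZMod p)).erase 1, f a) + f 1 + f 0 := by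
    rw [← Finset.sum_erase_add _ _ (Finset.mem_univ (0 : ZMod p))]
    congr 1
    rw [← Finset.sum_erase_add _ _ (Finset.mem_erase.mpr ⟨h01, Finset.mem_univ 1⟩)]
  have hmain : ∑ a ∈ (Finset.univ.erase (0 : ZMod p)).erase 1, f a
      = ((Finset.univ.filter (fun a : ZMod p => χ (a - 1) = 1 ∧ χ a = b)).card : ℤ) * 4 := by
    rw [Finset.sum_congr rfl (fun a ha => by
      rw [key a (Finset.ne_of_mem_erase (Finset.mem_of_mem_erase ha))
        (Finset.ne_of_mem_erase ha)])]
    rw [Finset.sum_ite, Finset.sum_const, Finset.sum_const_zero, add_zero]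
    rw [nsmul_eq_mul]
    have hset : Finset.filter (fun a : ZMod p => χ (a - 1) = 1 ∧ χ a = b)
        ((Finset.univ.erase (0 : ZMod p)).erase 1)
        = Finset.univ.filter (fun a : ZMod p => χ (a - 1) = 1 ∧ χ a = b) := by
      ext a
      simp only [Finset.mem_filter, Finset.mem_erase, Finset.mem_univ, and_true, true_and]
      constructor
      · rintro ⟨-, h⟩; exact h
      · rintro ⟨h1, h2⟩
        refine ⟨⟨?_, ?_⟩, h1, h2⟩
        · intro h; rw [h, sub_self] at h1; simp [hχ] at h1
        · intro h; rw [h, show χ 0 = 0 by simp [hχ]] at h2; exact hb0 h2.symm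
    rw [hset]
  have hf1 : f 1 = 1 + b := by
    simp only [hf]; rw [sub_self, show χ (0:ZMod p) = 0 by simp [hχ], map_one]; ring
  have hf0 : f 0 = 1 + χ (-1) := by
    simp only [hf, zero_sub]
    rw [show χ (0:ZMod p) = 0 by simp [hχ]]
    ring
  rw [hsplit, hmain, hf1, hf0] at hT1
  linarith


lemma dS_eq (hp2 : p ≠ 2) (g : ℕ) (hg1 : orderOf (g : ZMod p) = p - 1) (i : ℕ) (hi : i ≤ 1) :
    (Finset.range ((p - 1) / 2)).image (fun n => (g : ZMod p) ^ (2 * n + i))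
      = Finset.univ.filter (fun a => quadraticChar (ZMod p) a = (-1) ^ i) := by
  classical
  have hp3 : 3 ≤ p := by
    have h2 := (Fact.out : p.Prime).two_le
    rcases Nat.lt_or_ge p 3 with h | h
    · interval_cases p <;> simp_all
    · exact h
  have hpodd : p % 2 = 1 := Nat.odd_iff.mp ((Fact.out : p.Prime).odd_of_ne_two hp2)
  have hgpow : (g : ZMod p) ^ (p - 1) = 1 := by
    rw [← hg1]; exact pow_orderOf_eq_one _
  have hg0 : (g : ZMod p) ≠ 0 := by
    intro h
    rw [h, zero_pow (by omega : p - 1 ≠ 0)] at hgpow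
    exact zero_ne_one hgpow
  have hχg : quadraticChar (ZMod p) (g : ZMod p) = -1 := by
    rw [quadraticChar_neg_one_iff_not_isSquare]
    rintro ⟨b, hb⟩
    have hb0 : b ≠ 0 := by
      intro h; rw [h, mul_zero] at hb; exact hg0 hb
    have hpow : (g : ZMod p) ^ ((p - 1) / 2) = 1 := by
      rw [hb, ← pow_two, ← pow_mul]
      rw [show 2 * ((p - 1) / 2) = p - 1 by omega]
      exact ZMod.pow_card_sub_one_eq_one hb0
    have hdvd : p - 1 ∣ (p - 1) / 2 := by
      have := orderOf_dvd_of_pow_eq_one hpow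
      rwa [hg1] at this
    have := Nat.le_of_dvd (by omega) hdvd
    omega
  ext a
  simp only [Finset.mem_image, Finset.mem_range, Finset.mem_filter, Finset.mem_univ, true_and]
  constructor
  · rintro ⟨n, hn, rfl⟩
    rw [map_pow, hχg, pow_add, pow_mul, neg_one_sq, one_pow, one_mul]
  · intro ha
    have ha0 : a ≠ 0 := by
      intro h
      rw [h, quadraticChar_zero] at ha
      rcases Nat.le_one_iff_eq_zero_or_eq_one.mp hi with rfl | rfl <;> simp at ha
    -- a is a power of g
    set gu : (ZMod p)ˣ := Units.mk0 (g : ZMod p) hg0 with hgu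
    set au : (ZMod p)ˣ := Units.mk0 a ha0 with hau
    have hogu : orderOf gu = p - 1 := by
      rw [← orderOf_units]; exact hg1
    have htop : Subgroup.zpowers gu = ⊤ := by
      apply Subgroup.eq_top_of_card_eq
      rw [Nat.card_zpowers, hogu, Nat.card_eq_fintype_card, ZMod.card_units]
    have hmem : au ∈ Submonoid.powers gu := by
      rw [mem_powers_iff_mem_zpowers, htop]
      trivial
    obtain ⟨k, hk⟩ := hmem
    set m := k % (p - 1) with hm
    have hmlt : m < p - 1 := Nat.mod_lt _ (by omega)
    have hgm : (g : ZMod p) ^ m = a := by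
      have : gu ^ m = au := by
        rw [hm, ← hogu, pow_mod_orderOf]
        exact hk
      have := congrArg Units.val this
      simpa [hgu, hau] using this
    have hχm : ((-1 : ℤ)) ^ m = (-1) ^ i := by
      rw [← ha, ← hgm, map_pow, hχg]
    have hpar : m % 2 = i % 2 := by
      rcases Nat.even_or_odd m with hme | hme
      · rw [hme.neg_one_pow] at hχm
        rcases Nat.even_or_odd i with hie | hie
        · rw [Nat.even_iff] at hme hie; omega
        · rw [hie.neg_one_pow] at hχm; norm_num at hχm
      · rw [hme.neg_one_pow] at hχm
        rcases Nat.even_or_odd i with hie | hie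
        · rw [hie.neg_one_pow] at hχm; norm_num at hχm
        · rw [Nat.odd_iff] at hme hie; omega
    refine ⟨(m - i) / 2, by omega, ?_⟩
    rw [show 2 * ((m - i) / 2) + i = m by omega]
    exact hgm

end chars


section transfer

variable (p g : ℕ) [Fact p.Prime]

lemma crt_inj (hp2 : p ≠ 2) {x y : ZMod (2 * p)}
    (h2 : (ZMod.castHom (dvd_mul_right 2 p) (ZMod 2)) x
        = (ZMod.castHom (dvd_mul_right 2 p) (ZMod 2)) y)
    (hpp : (ZMod.castHom (dvd_mul_left p 2) (ZMod p)) x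
        = (ZMod.castHom (dvd_mul_left p 2) (ZMod p)) y) : x = y := by
  have hppos := (Fact.out : p.Prime).pos
  haveI : NeZero (2 * p) := ⟨by omega⟩
  have hx : ((x.val : ℕ) : ZMod (2 * p)) = x := by
    rw [ZMod.natCast_val, ZMod.cast_id]
  have hy : ((y.val : ℕ) : ZMod (2 * p)) = y := by
    rw [ZMod.natCast_val, ZMod.cast_id]
  rw [← hx, ← hy, map_natCast, map_natCast] at h2 hpp
  rw [ZMod.natCast_eq_natCast_iff] at h2 hpp
  have hco : Nat.Coprime 2 p := by
    exact (Nat.coprime_primes Nat.prime_two (Fact.out : p.Prime)).mpr (Ne.symm hp2)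
  have hmod : x.val ≡ y.val [MOD 2 * p] :=
    (Nat.modEq_and_modEq_iff_modEq_mul hco).mp ⟨h2, hpp⟩
  have : x.val = y.val := Nat.ModEq.eq_of_lt_of_lt hmod (ZMod.val_lt x) (ZMod.val_lt y)
  rw [← hx, ← hy, this]

lemma phi_Dcl (hgodd : Odd g) {i : ℕ} {u : ZMod (2 * p)} (hu : u ∈ Dcl p g i) :
    (ZMod.castHom (dvd_mul_right 2 p) (ZMod 2)) u = 1 := by
  simp only [Dcl, Finset.mem_image, Finset.mem_range] at hu
  obtain ⟨n, -, rfl⟩ := hu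
  rw [map_pow, map_natCast]
  have : (g : ZMod 2) = 1 := by
    have h1 : g % 2 = 1 := Nat.odd_iff.mp hgodd
    rw [← ZMod.natCast_mod g 2, h1, Nat.cast_one]
  rw [this, one_pow]

lemma transfer_card (hp2 : p ≠ 2) (hgodd : Odd g) (j : ℕ) :
    ((Dcl p g 0).image (fun u => 1 + u) ∩ Ecl p g j).card
      = ((((Finset.range ((p - 1) / 2)).image
            (fun n => (g : ZMod p) ^ (2 * n + 0))).image (fun u => 1 + u))
        ∩ (((Finset.range ((p - 1) / 2)).image
            (fun n => (g : ZMod p) ^ (2 * n + j))).image (fun v => 2 * v))).card := by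
  classical
  set φ := ZMod.castHom (dvd_mul_right 2 p) (ZMod 2) with hφ
  set π := ZMod.castHom (dvd_mul_left p 2) (ZMod p) with hπ
  set A := (Dcl p g 0).image (fun u => 1 + u) ∩ Ecl p g j with hA
  -- every element of A has φ = 0
  have hAeven : ∀ x ∈ A, φ x = 0 := by
    intro x hx
    rw [hA, Finset.mem_inter, Finset.mem_image] at hx
    obtain ⟨⟨u, hu, rfl⟩, -⟩ := hx
    rw [map_add, map_one, phi_Dcl p g hgodd hu]
    decide
  -- π is injective on A
  have hinj : Set.InjOn π A := by
    intro x hx y hy hxy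
    exact crt_inj p hp2 (by rw [hAeven x hx, hAeven y hy]) hxy
  rw [← Finset.card_image_of_injOn hinj]
  congr 1
  -- image of A under π equals the intersection of images
  have himg : A.image π
      = ((Dcl p g 0).image (fun u => 1 + u)).image π ∩ (Ecl p g j).image π := by
    apply Finset.Subset.antisymm
    · intro a ha
      rw [Finset.mem_image] at ha
      obtain ⟨x, hx, rfl⟩ := ha
      rw [hA, Finset.mem_inter] at hx
      exact Finset.mem_inter.mpr ⟨Finset.mem_image_of_mem _ hx.1, Finset.mem_image_of_mem _ hx.2⟩
    · intro a ha
      rw [Finset.mem_inter, Finset.mem_image, Finset.mem_image] at ha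
      obtain ⟨⟨x, hx, rfl⟩, ⟨y, hy, hyx⟩⟩ := ha
      have hφx : φ x = 0 := by
        rw [Finset.mem_image] at hx
        obtain ⟨u, hu, rfl⟩ := hx
        rw [map_add, map_one, phi_Dcl p g hgodd hu]; decide
      have hφy : φ y = 0 := by
        rw [Ecl, Finset.mem_image] at hy
        obtain ⟨v, hv, rfl⟩ := hy
        rw [map_mul]
        have : φ (2 : ZMod (2*p)) = 0 := by
          rw [show (2 : ZMod (2*p)) = ((2:ℕ) : ZMod (2*p)) by push_cast; ring, map_natCast]
          decide
        rw [this, zero_mul]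
      have hxy : y = x := crt_inj p hp2 (by rw [hφx, hφy]) hyx
      rw [hxy] at hy
      exact Finset.mem_image_of_mem _ (Finset.mem_inter.mpr ⟨hx, hy⟩)
  rw [himg]
  congr 1
  · rw [Finset.image_image, Dcl, Finset.image_image, Finset.image_image]
    apply Finset.image_congr
    intro n _
    simp only [Function.comp]
    rw [map_add, map_one, map_pow, map_natCast]
  · rw [Ecl, Finset.image_image, Dcl, Finset.image_image, Finset.image_image]
    apply Finset.image_congr
    intro n _
    simp only [Function.comp]
    rw [map_mul, map_pow, map_natCast]
    congr 1
    rw [show (2 : ZMod (2*p)) = ((2:ℕ) : ZMod (2*p)) by push_cast; ring, map_natCast]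
    push_cast; ring

end transfer


section images
variable {p : ℕ} [Fact p.Prime]

lemma image_one_add :
    ((Finset.univ.filter (fun a : ZMod p => quadraticChar (ZMod p) a = 1)).image
        (fun u => 1 + u))
      = Finset.univ.filter (fun a : ZMod p => quadraticChar (ZMod p) (a - 1) = 1) := by
  ext a
  simp only [Finset.mem_image, Finset.mem_filter, Finset.mem_univ, true_and]
  constructor
  · rintro ⟨u, hu, rfl⟩
    rw [add_sub_cancel_left]
    exact hu
  · intro h
    exact ⟨a - 1, h, by ring⟩

lemma image_two_mul (hp2 : p ≠ 2) (c : ℤ) :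
    ((Finset.univ.filter (fun a : ZMod p => quadraticChar (ZMod p) a = c)).image
        (fun v => 2 * v))
      = Finset.univ.filter
          (fun a : ZMod p => quadraticChar (ZMod p) a = c * quadraticChar (ZMod p) 2) := by
  classical
  have h20 : (2 : ZMod p) ≠ 0 := by
    intro h
    have := (ZMod.natCast_eq_zero_iff 2 p).mp (by push_cast at h ⊢; exact h)
    have := Nat.le_of_dvd (by norm_num) this
    have := (Fact.out : p.Prime).two_le
    omega
  ext a
  simp only [Finset.mem_image, Finset.mem_filter, Finset.mem_univ, true_and]
  constructor
  · rintro ⟨v, hv, rfl⟩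
    rw [map_mul, hv]
    ring
  · intro h
    refine ⟨2⁻¹ * a, ?_, by field_simp⟩
    have hinv : quadraticChar (ZMod p) 2⁻¹ * quadraticChar (ZMod p) 2 = 1 := by
      rw [← map_mul, inv_mul_cancel₀ h20, map_one]
    have h22 : quadraticChar (ZMod p) 2 * quadraticChar (ZMod p) 2 = 1 := by
      rw [← pow_two]
      exact quadraticChar_sq_one h20
    rw [map_mul, h]
    calc quadraticChar (ZMod p) 2⁻¹ * (c * quadraticChar (ZMod p) 2)
        = c * (quadraticChar (ZMod p) 2⁻¹ * quadraticChar (ZMod p) 2) := by ring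
      _ = c := by rw [hinv, mul_one]

end images

section master

lemma master_count (p g : ℕ) [Fact p.Prime] (hp2 : p ≠ 2) (hgodd : Odd g)
    (hg1 : orderOf (g : ZMod p) = p - 1) (j : ℕ) (hj : j ≤ 1) :
    (((Dcl p g 0).image (fun u => 1 + u) ∩ Ecl p g j).card : ℤ) * 4
      = p - 2 - 2 * ((-1) ^ j * quadraticChar (ZMod p) 2)
          - quadraticChar (ZMod p) (-1) := by
  classical
  have hrc : ringChar (ZMod p) ≠ 2 := by rw [ZMod.ringChar_zmod_n]; exact hp2
  have h20 : (2 : ZMod p) ≠ 0 := by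
    intro h
    have hd := (ZMod.natCast_eq_zero_iff 2 p).mp (by push_cast at h ⊢; exact h)
    have h1 := Nat.le_of_dvd (by norm_num) hd
    have h2 := (Fact.out : p.Prime).two_le
    omega
  have hb : (-1 : ℤ) ^ j * quadraticChar (ZMod p) 2 = 1
      ∨ (-1 : ℤ) ^ j * quadraticChar (ZMod p) 2 = -1 := by
    rcases quadraticChar_dichotomy h20 with h | h <;>
      rcases Nat.le_one_iff_eq_zero_or_eq_one.mp hj with rfl | rfl <;>
      rw [h] <;> norm_num
  rw [transfer_card p g hp2 hgodd j]
  rw [dS_eq hp2 g hg1 0 (by norm_num), dS_eq hp2 g hg1 j hj]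
  simp only [pow_zero]
  rw [image_one_add, image_two_mul hp2 _, ← Finset.filter_and]
  exact count_lemma hrc _ hb

end master

theorem stmt10 (p g : ℕ) (hp : p.Prime) (hpodd : Odd p)
    (hgodd : Odd g)
    (hg1 : orderOf (g : ZMod p) = p - 1)
    (hg2 : orderOf (g : ZMod (2 * p)) = p - 1) :
    (p % 8 = 1 →
      ((Dcl p g 0).image (fun u => 1 + u) ∩ Ecl p g 0).card = (p - 5) / 4 ∧
      ((Dcl p g 0).image (fun u => 1 + u) ∩ Ecl p g 1).card = (p - 1) / 4) ∧
    (p % 8 = 7 →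
      ((Dcl p g 0).image (fun u => 1 + u) ∩ Ecl p g 0).card = (p - 3) / 4 ∧
      ((Dcl p g 0).image (fun u => 1 + u) ∩ Ecl p g 1).card = (p + 1) / 4) ∧
    (p % 8 = 5 →
      ((Dcl p g 0).image (fun u => 1 + u) ∩ Ecl p g 0).card = (p - 1) / 4 ∧
      ((Dcl p g 0).image (fun u => 1 + u) ∩ Ecl p g 1).card = (p - 5) / 4) ∧
    (p % 8 = 3 →
      ((Dcl p g 0).image (fun u => 1 + u) ∩ Ecl p g 0).card = (p + 1) / 4 ∧
      ((Dcl p g 0).image (fun u => 1 + u) ∩ Ecl p g 1).card = (p - 3) / 4) := by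
  haveI := Fact.mk hp
  have hp2 : p ≠ 2 := by
    rintro rfl
    exact (by norm_num : ¬ Odd 2) hpodd
  have hp3 : 3 ≤ p := by
    have := hp.two_le
    have := Nat.odd_iff.mp hpodd
    omega
  have hrc : ringChar (ZMod p) ≠ 2 := by rw [ZMod.ringChar_zmod_n]; exact hp2
  have hneg1 : quadraticChar (ZMod p) (-1) = ZMod.χ₄ (p : ZMod 4) := by
    rw [quadraticChar_neg_one hrc, ZMod.card p]
  have h2v : quadraticChar (ZMod p) 2 = ZMod.χ₈ (p : ZMod 8) := by
    rw [quadraticChar_two hrc, ZMod.card p]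
  have key : ∀ j : ℕ, j ≤ 1 →
      (((Dcl p g 0).image (fun u => 1 + u) ∩ Ecl p g j).card : ℤ) * 4
        = p - 2 - 2 * ((-1) ^ j * ZMod.χ₈ (p : ZMod 8)) - ZMod.χ₄ (p : ZMod 4) := by
    intro j hj
    rw [← hneg1, ← h2v]
    exact master_count p g hp2 hgodd hg1 j hj
  have hχ4 : ZMod.χ₄ (p : ZMod 4) = if p % 2 = 0 then 0 else if p % 4 = 1 then 1 else -1 :=
    ZMod.χ₄_nat_eq_if_mod_four p
  have hχ8 : ZMod.χ₈ (p : ZMod 8) = if p % 2 = 0 then 0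
      else if p % 8 = 1 ∨ p % 8 = 7 then 1 else -1 :=
    ZMod.χ₈_nat_eq_if_mod_eight p
  have hpodd' : p % 2 = 1 := Nat.odd_iff.mp hpodd
  have k0 := key 0 (by norm_num)
  have k1 := key 1 (by norm_num)
  refine ⟨?_, ?_, ?_, ?_⟩
  · intro h8
    have e4 : ZMod.χ₄ (p : ZMod 4) = 1 := by
      rw [hχ4, if_neg (by omega), if_pos (by omega)]
    have e8 : ZMod.χ₈ (p : ZMod 8) = 1 := by
      rw [hχ8, if_neg (by omega), if_pos (by omega)]
    rw [e4, e8] at k0 k1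
    have k0' : (((Dcl p g 0).image (fun u => 1 + u) ∩ Ecl p g 0).card : ℤ) * 4
        = (p : ℤ) - 5 := by rw [k0]; ring
    have k1' : (((Dcl p g 0).image (fun u => 1 + u) ∩ Ecl p g 1).card : ℤ) * 4
        = (p : ℤ) - 1 := by rw [k1]; ring
    exact ⟨by omega, by omega⟩
  · intro h8
    have e4 : ZMod.χ₄ (p : ZMod 4) = -1 := by
      rw [hχ4, if_neg (by omega), if_neg (by omega)]
    have e8 : ZMod.χ₈ (p : ZMod 8) = 1 := by
      rw [hχ8, if_neg (by omega), if_pos (by omega)]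
    rw [e4, e8] at k0 k1
    have k0' : (((Dcl p g 0).image (fun u => 1 + u) ∩ Ecl p g 0).card : ℤ) * 4
        = (p : ℤ) - 3 := by rw [k0]; ring
    have k1' : (((Dcl p g 0).image (fun u => 1 + u) ∩ Ecl p g 1).card : ℤ) * 4
        = (p : ℤ) + 1 := by rw [k1]; ring
    exact ⟨by omega, by omega⟩
  · intro h8
    have e4 : ZMod.χ₄ (p : ZMod 4) = 1 := by
      rw [hχ4, if_neg (by omega), if_pos (by omega)]
    have e8 : ZMod.χ₈ (p : ZMod 8) = -1 := by
      rw [hχ8, if_neg (by omega), if_neg (by omega)]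
    rw [e4, e8] at k0 k1
    have k0' : (((Dcl p g 0).image (fun u => 1 + u) ∩ Ecl p g 0).card : ℤ) * 4
        = (p : ℤ) - 1 := by rw [k0]; ring
    have k1' : (((Dcl p g 0).image (fun u => 1 + u) ∩ Ecl p g 1).card : ℤ) * 4
        = (p : ℤ) - 5 := by rw [k1]; ring
    exact ⟨by omega, by omega⟩
  · intro h8
    have e4 : ZMod.χ₄ (p : ZMod 4) = -1 := by
      rw [hχ4, if_neg (by omega), if_neg (by omega)]
    have e8 : ZMod.χ₈ (p : ZMod 8) = -1 := by
      rw [hχ8, if_neg (by omega), if_neg (by omega)]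
    rw [e4, e8] at k0 k1
    have k0' : (((Dcl p g 0).image (fun u => 1 + u) ∩ Ecl p g 0).card : ℤ) * 4
        = (p : ℤ) + 1 := by rw [k0]; ring
    have k1' : (((Dcl p g 0).image (fun u => 1 + u) ∩ Ecl p g 1).card : ℤ) * 4
        = (p : ℤ) - 3 := by rw [k1]; ring
    exact ⟨by omega, by omega⟩
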